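/- Let A, V ∈ ℝ^{d×d}, Σ₀ ≻ 0 positive definite, and assume V commutes with Σ₀ and with VA + AᵀVᵀ. Then Σ(t) = (Σ₀⁻¹ − t(VA + AᵀVᵀ))⁻¹ solves the matrix ODE Σ̇ = VΣAΣ + ΣAᵀΣVᵀ with Σ(0) = Σ₀, on the interval where Σ₀⁻¹ − t(VA + AᵀVᵀ) is invertible. -/

import Mathlib

open Matrix

attribute [local instance] Matrix.linftyOpNormedRing Matrix.linftyOpNormedAlgebra

/-- If `V` commutes with `Σ₀ ≻ 0` and with `M := VA + AᵀVᵀ`, then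
`Σ(t) = (Σ₀⁻¹ − t M)⁻¹` solves the matrix ODE `Σ̇ = VΣAΣ + ΣAᵀΣVᵀ`, `Σ(0) = Σ₀`,
(entrywise derivatives) on the set of times where `Σ₀⁻¹ − t M` is invertible. -/
theorem stmt_4 (d : ℕ) (A V S₀ : Matrix (Fin d) (Fin d) ℝ) (hS₀ : S₀.PosDef)
    (M : Matrix (Fin d) (Fin d) ℝ) (hM : M = V * A + (V * A)ᵀ)
    (hcomm₁ : V * S₀ = S₀ * V) (hcomm₂ : V * M = M * V) :
    (S₀⁻¹ - (0 : ℝ) • M)⁻¹ = S₀ ∧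
    ∀ t : ℝ, IsUnit (S₀⁻¹ - t • M) →
      ∀ i j : Fin d,
        HasDerivAt (fun τ : ℝ => ((S₀⁻¹ - τ • M)⁻¹) i j)
          ((V * (S₀⁻¹ - t • M)⁻¹ * A * (S₀⁻¹ - t • M)⁻¹ +
            (S₀⁻¹ - t • M)⁻¹ * Aᵀ * (S₀⁻¹ - t • M)⁻¹ * Vᵀ) i j) t := by
  have hS₀det : IsUnit S₀.det := isUnit_iff_ne_zero.2 hS₀.det_pos.ne'
  constructor
  · simp [Matrix.nonsing_inv_nonsing_inv S₀ hS₀det]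
  intro t hU i j
  set B : Matrix (Fin d) (Fin d) ℝ := S₀⁻¹ - t • M with hB
  have hBdet : IsUnit B.det := (Matrix.isUnit_iff_isUnit_det B).1 hU
  have hBB : B * B⁻¹ = 1 := Matrix.mul_nonsing_inv B hBdet
  have hBB' : B⁻¹ * B = 1 := Matrix.nonsing_inv_mul B hBdet
  -- V commutes with B
  have hVS₀inv : V * S₀⁻¹ = S₀⁻¹ * V := by
    have h1 : S₀⁻¹ * (V * S₀) * S₀⁻¹ = S₀⁻¹ * (S₀ * V) * S₀⁻¹ := by rw [hcomm₁]
    have hS : S₀ * S₀⁻¹ = 1 := Matrix.mul_nonsing_inv S₀ hS₀det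
    have hS' : S₀⁻¹ * S₀ = 1 := Matrix.nonsing_inv_mul S₀ hS₀det
    calc V * S₀⁻¹ = S₀⁻¹ * S₀ * V * S₀⁻¹ := by rw [hS']; simp [Matrix.one_mul]
    _ = S₀⁻¹ * (V * S₀) * S₀⁻¹ := by rw [hcomm₁]; noncomm_ring
    _ = S₀⁻¹ * V * (S₀ * S₀⁻¹) := by noncomm_ring
    _ = S₀⁻¹ * V := by rw [hS, Matrix.mul_one]
  have hVB : V * B = B * V := by
    simp only [hB, Matrix.mul_sub, Matrix.sub_mul, Matrix.mul_smul, Matrix.smul_mul,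
      hVS₀inv, hcomm₂]
  have hVBinv : V * B⁻¹ = B⁻¹ * V := by
    calc V * B⁻¹ = B⁻¹ * B * V * B⁻¹ := by rw [hBB']; simp [Matrix.one_mul]
    _ = B⁻¹ * (V * B) * B⁻¹ := by rw [hVB]; noncomm_ring
    _ = B⁻¹ * V * (B * B⁻¹) := by noncomm_ring
    _ = B⁻¹ * V := by rw [hBB, Matrix.mul_one]
  -- B and B⁻¹ are symmetric
  have hMT : Mᵀ = M := by rw [hM]; simp [Matrix.transpose_add]; exact add_comm _ _
  have hS₀T : S₀ᵀ = S₀ := by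
    have := hS₀.isHermitian
    rwa [Matrix.IsHermitian, Matrix.conjTranspose_eq_transpose_of_trivial] at this
  have hBT : Bᵀ = B := by
    simp [hB, Matrix.transpose_sub, Matrix.transpose_smul, hMT, Matrix.transpose_nonsing_inv,
      hS₀T]
  have hBinvT : (B⁻¹)ᵀ = B⁻¹ := by rw [Matrix.transpose_nonsing_inv, hBT]
  have hVTBinv : B⁻¹ * Vᵀ = Vᵀ * B⁻¹ := by
    have := congrArg Matrix.transpose hVBinv
    simpa [Matrix.transpose_mul, hBinvT] using this
  -- key algebraic identity
  have hkey : B⁻¹ * M * B⁻¹ =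
      V * B⁻¹ * A * B⁻¹ + B⁻¹ * Aᵀ * B⁻¹ * Vᵀ := by
    have h1 : B⁻¹ * (V * A) * B⁻¹ = V * B⁻¹ * A * B⁻¹ := by
      calc B⁻¹ * (V * A) * B⁻¹ = (B⁻¹ * V) * (A * B⁻¹) := by noncomm_ring
      _ = (V * B⁻¹) * (A * B⁻¹) := by rw [← hVBinv]
      _ = V * B⁻¹ * A * B⁻¹ := by noncomm_ring
    have h2 : B⁻¹ * (Aᵀ * Vᵀ) * B⁻¹ = B⁻¹ * Aᵀ * B⁻¹ * Vᵀ := by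
      calc B⁻¹ * (Aᵀ * Vᵀ) * B⁻¹ = B⁻¹ * Aᵀ * (Vᵀ * B⁻¹) := by noncomm_ring
      _ = B⁻¹ * Aᵀ * (B⁻¹ * Vᵀ) := by rw [hVTBinv]
      _ = B⁻¹ * Aᵀ * B⁻¹ * Vᵀ := by noncomm_ring
    rw [hM]
    simp only [Matrix.transpose_mul, Matrix.mul_add, Matrix.add_mul]
    rw [h1, h2]
  -- derivative of τ ↦ B τ
  have hBdiff : HasDerivAt (fun τ : ℝ => S₀⁻¹ - τ • M) (-M) t := by
    have h := ((hasDerivAt_id t).smul_const M).const_sub (S₀⁻¹)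
    simp at h; exact h
  -- derivative of inversion
  obtain ⟨u, hu⟩ := hU
  have huinv : (↑u⁻¹ : Matrix (Fin d) (Fin d) ℝ) = B⁻¹ := by
    rw [Matrix.nonsing_inv_eq_ringInverse, ← hu, Ring.inverse_unit]
  have hinv : HasFDerivAt Ring.inverse
      (-ContinuousLinearMap.mulLeftRight ℝ (Matrix (Fin d) (Fin d) ℝ) ↑u⁻¹ ↑u⁻¹) B := by
    rw [← hu]; exact hasFDerivAt_ringInverse u
  have hcomp : HasDerivAt (fun τ : ℝ => Ring.inverse (S₀⁻¹ - τ • M))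
      (B⁻¹ * M * B⁻¹) t := by
    have h := hinv.comp_hasDerivAt t hBdiff
    refine h.congr_deriv ?_
    simp [huinv, ContinuousLinearMap.mulLeftRight_apply, Matrix.mul_assoc]
  have hcomp' : HasDerivAt (fun τ : ℝ => (S₀⁻¹ - τ • M)⁻¹) (B⁻¹ * M * B⁻¹) t := by
    have : (fun τ : ℝ => (S₀⁻¹ - τ • M)⁻¹) = fun τ : ℝ => Ring.inverse (S₀⁻¹ - τ • M) := by
      funext τ; exact Matrix.nonsing_inv_eq_ringInverse _
    rw [this]; exact hcomp
  -- project to entry (i, j)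
  let L : Matrix (Fin d) (Fin d) ℝ →L[ℝ] ℝ :=
    LinearMap.toContinuousLinearMap (Matrix.entryLinearMap ℝ ℝ i j)
  have hfinal := L.hasFDerivAt.comp_hasDerivAt t hcomp'
  have : HasDerivAt (fun τ : ℝ => ((S₀⁻¹ - τ • M)⁻¹) i j) ((B⁻¹ * M * B⁻¹) i j) t := hfinal
  rw [hkey] at this
  exact this
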